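/- For every integer n ≥ 2 and odd n ≥ 3, if a_0, ..., a_{n+1} are positive integers and d = a_0⋯a_{n+1} + (−1)^{n+1}, then the linear system w_i + a_{i-1} w_{i-1} = d (indices mod n+2) has determinant d and admits a unique rational solution (w_0, ..., w_{n+1}); moreover each w_i is positive. -/

import Mathlib

open Matrix Equiv
open Fin.NatCast

section aux

variable {n : ℕ}

lemma fin_one_ne_zero' : (1 : Fin (n + 2)) ≠ 0 := by
  simp [Fin.ext_iff]

lemma fin_sub_one_ne (i : Fin (n + 2)) : i - 1 ≠ i := by
  intro h
  exact fin_one_ne_zero' (left_eq_add.mp (sub_eq_iff_eq_add.mp h))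

lemma fin_succ_ne (i : Fin (n + 2)) : i ≠ i + 1 := by
  intro h
  exact fin_one_ne_zero' (left_eq_add.mp h)

end aux

/-- For odd `n ≥ 3` and positive integers `a_0, …, a_{n+1}`, with
`d = a_0⋯a_{n+1} + (−1)^{n+1}`, the linear system `w_i + a_{i−1} w_{i−1} = d` (indices mod
`n+2`) has coefficient matrix of determinant `d`, admits a unique rational solution
`(w_0, …, w_{n+1})`, and every solution has all entries positive. -/
theorem kollar_weight_system (n : ℕ) (hodd : Odd n) (hn : 3 ≤ n)
    (a : Fin (n + 2) → ℤ) (ha : ∀ i, 0 < a i) :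
    let d : ℤ := (∏ i, a i) + (-1) ^ (n + 1)
    let M : Matrix (Fin (n + 2)) (Fin (n + 2)) ℚ := fun i j =>
      if j = i then 1 else if j = i - 1 then (a (i - 1) : ℚ) else 0
    M.det = (d : ℚ) ∧
      (∃! w : Fin (n + 2) → ℚ, ∀ i, w i + (a (i - 1) : ℚ) * w (i - 1) = (d : ℚ)) ∧
      ∀ w : Fin (n + 2) → ℚ, (∀ i, w i + (a (i - 1) : ℚ) * w (i - 1) = (d : ℚ)) →
        ∀ i, 0 < w i := by
  intro d M
  have hneg : ((-1 : ℤ)) ^ (n + 1) = 1 := (Odd.add_one hodd).neg_one_pow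
  have hprodpos : 0 < ∏ i, a i := Finset.prod_pos (fun i _ => ha i)
  have hd : d = (∏ i, a i) + 1 := by rw [show d = (∏ i, a i) + (-1)^(n+1) from rfl, hneg]
  have hdpos : (0 : ℤ) < d := by rw [hd]; positivity
  have hdQ : (0 : ℚ) < (d : ℚ) := by exact_mod_cast hdpos
  set c : Equiv.Perm (Fin (n + 2)) := finRotate (n + 2) with hc
  have hcapp : ∀ i : Fin (n + 2), c i = i + 1 := fun i => finRotate_succ_apply i
  have hsignc : Equiv.Perm.sign c = 1 := by
    rw [hc, sign_finRotate]
    exact (Odd.add_one hodd).neg_one_pow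
  have hc1 : c ≠ 1 := by
    intro h
    have h0 := hcapp 0
    rw [h] at h0
    simp only [Equiv.Perm.one_apply, zero_add] at h0
    exact fin_one_ne_zero' h0.symm
  -- determinant
  have hdet : M.det = (d : ℚ) := by
    rw [Matrix.det_apply]
    have hzero : ∀ σ ∈ Finset.univ, σ ∉ ({1, c} : Finset (Equiv.Perm (Fin (n+2)))) →
        Equiv.Perm.sign σ • ∏ i, M (σ i) i = 0 := by
      intro σ _ hσ
      simp only [Finset.mem_insert, Finset.mem_singleton, not_or] at hσ
      obtain ⟨hσ1, hσc⟩ := hσ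
      by_cases hall : ∀ i, σ i = i ∨ σ i = i + 1
      · by_cases hj : ∃ j, σ j = j + 1
        · obtain ⟨j, hjj⟩ := hj
          exfalso
          apply hσc
          have key : ∀ t : ℕ, σ (j + (t : Fin (n+2))) = j + (t : Fin (n+2)) + 1 := by
            intro t
            induction t with
            | zero => simpa using hjj
            | succ t ih =>
              have hcast : ((t + 1 : ℕ) : Fin (n+2)) = (t : Fin (n+2)) + 1 := by push_cast; ring
              rw [hcast, ← add_assoc]
              rcases hall (j + (t : Fin (n+2)) + 1) with h | h
              · exfalso
                have heq : σ (j + (t : Fin (n+2)) + 1) = σ (j + (t : Fin (n+2))) := by rw [h, ih]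
                exact fin_succ_ne _ (σ.injective heq).symm
              · exact h
          ext i : 1
          have hk := key ((i - j).val)
          rw [Fin.cast_val_eq_self] at hk
          simp only [add_sub_cancel] at hk
          rw [hcapp, hk]
        · exfalso
          apply hσ1
          ext i : 1
          rcases hall i with h | h
          · simp [h]
          · exact absurd ⟨i, h⟩ hj
      · push_neg at hall
        obtain ⟨i, h1, h2⟩ := hall
        have hMz : M (σ i) i = 0 := by
          simp only [M]
          rw [if_neg (fun h => h1 h.symm),
            if_neg (fun h => h2 (eq_sub_iff_add_eq.mp h).symm)]
        have hp : ∏ k, M (σ k) k = 0 := Finset.prod_eq_zero (Finset.mem_univ i) hMz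
        rw [hp, smul_zero]
    rw [← Finset.sum_subset (Finset.subset_univ ({1, c} : Finset (Equiv.Perm (Fin (n+2)))))
      (fun σ _ h => hzero σ (Finset.mem_univ σ) h)]
    rw [Finset.sum_pair (Ne.symm hc1)]
    have hterm1 : (Equiv.Perm.sign (1 : Equiv.Perm (Fin (n+2)))) • ∏ i, M ((1 : Equiv.Perm (Fin (n+2))) i) i = 1 := by
      simp [M]
    have htermc : (Equiv.Perm.sign c) • ∏ i, M (c i) i = ((∏ i, a i : ℤ) : ℚ) := by
      rw [hsignc, one_smul]
      push_cast
      apply Finset.prod_congr rfl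
      intro i _
      rw [hcapp]
      simp only [M]
      rw [if_neg (fin_succ_ne i), add_sub_cancel_right, if_pos rfl]
    rw [hterm1, htermc, hd]
    push_cast
    ring
  -- mulVec computation
  have hmul : ∀ (w : Fin (n+2) → ℚ) (i : Fin (n+2)),
      M.mulVec w i = w i + (a (i-1) : ℚ) * w (i-1) := by
    intro w i
    have hne : i - 1 ≠ i := fin_sub_one_ne i
    have hsum : M.mulVec w i = ∑ j ∈ ({i, i-1} : Finset (Fin (n+2))), M i j * w j := by
      rw [Matrix.mulVec, dotProduct]
      symm
      apply Finset.sum_subset (Finset.subset_univ _)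
      intro j _ hj
      simp only [Finset.mem_insert, Finset.mem_singleton, not_or] at hj
      simp [M, hj.1, hj.2]
    rw [hsum, Finset.sum_pair (Ne.symm hne)]
    simp [M, hne]
  refine ⟨hdet, ?_, ?_⟩
  · -- unique solution
    have hdetu : IsUnit M.det := by
      rw [hdet]; exact isUnit_iff_ne_zero.mpr hdQ.ne'
    refine ⟨M⁻¹.mulVec (fun _ => (d : ℚ)), ?_, ?_⟩
    · intro i
      rw [← hmul, Matrix.mulVec_mulVec, Matrix.mul_nonsing_inv _ hdetu, Matrix.one_mulVec]
    · intro w hw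
      have h1 : M.mulVec w = (fun _ => (d : ℚ)) := funext fun i => by rw [hmul]; exact hw i
      calc w = (M⁻¹ * M).mulVec w := by rw [Matrix.nonsing_inv_mul _ hdetu, Matrix.one_mulVec]
        _ = M⁻¹.mulVec (M.mulVec w) := by rw [← Matrix.mulVec_mulVec]
        _ = M⁻¹.mulVec (fun _ => (d : ℚ)) := by rw [h1]
  · -- positivity
    intro w hw
    have haQ : ∀ i, (1 : ℚ) ≤ (a i : ℚ) := fun i => by exact_mod_cast ha i
    have step1 : ∀ k : Fin (n+2), w k ≤ 0 → (d : ℚ) ≤ w (k + 1) := by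
      intro k hk
      have heq := hw (k + 1)
      rw [add_sub_cancel_right] at heq
      nlinarith [mul_nonpos_of_nonneg_of_nonpos (le_trans zero_le_one (haQ k)) hk]
    have step2 : ∀ k : Fin (n+2), (d : ℚ) ≤ w k → w (k + 1) ≤ 0 := by
      intro k hk
      have heq := hw (k + 1)
      rw [add_sub_cancel_right] at heq
      nlinarith [mul_le_mul_of_nonneg_right (haQ k) (le_trans hdQ.le hk)]
    intro i
    by_contra hcon
    push_neg at hcon
    have key : ∀ t : ℕ, w (i + ((2 * t : ℕ) : Fin (n+2))) ≤ 0 := by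
      intro t
      induction t with
      | zero => simpa using hcon
      | succ t ih =>
        have hcast : ((2 * (t + 1) : ℕ) : Fin (n+2)) = ((2 * t : ℕ) : Fin (n+2)) + 1 + 1 := by
          rw [show 2 * (t + 1) = 2 * t + 1 + 1 by ring, Nat.cast_succ, Nat.cast_succ]
        rw [hcast, ← add_assoc, ← add_assoc]
        exact step2 _ (step1 _ ih)
    obtain ⟨k, hk⟩ := hodd
    have h1 : w (i + 1) ≤ 0 := by
      have hkey := key ((n + 3) / 2)
      have heq2 : (2 * ((n + 3) / 2) : ℕ) = n + 3 := by omega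
      rw [heq2] at hkey
      have hcast : ((n + 3 : ℕ) : Fin (n+2)) = 1 := by
        have h3 : ((n + 3 : ℕ) : Fin (n+2)) = ((n + 2 : ℕ) : Fin (n+2)) + 1 := by rw [show n + 3 = (n + 2) + 1 by ring, Nat.cast_succ]
        rw [h3, Fin.natCast_self, zero_add]
      rwa [hcast] at hkey
    have h2 : (d : ℚ) ≤ w (i + 1) := step1 i hcon
    linarith
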